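/- Let n ≥ 1 and l ≥ 1 be integers, and let p_c, p_e, p_s be strictly positive reals with p_c + p_e + p_s = 1 and p_c > p_s/(2^l − 1). Let z : Fin n → Option(𝔽₂^l) be such that any two non-erased entries are distinct (i.e., if z_i = z_j ≠ none then i = j). Then for any two injective maps x¹, x² : Fin n → 𝔽₂^l (encoded matrices with pairwise distinct rows), L(x¹, z) > L(x², z) if and only if |{i : ∃ j, z_j = some(x¹_i)}| > |{i : ∃ j, z_j = some(x²_i)}|; that is, the permutation-averaged channel likelihood of x under z is larger exactly when x shares more rows with the non-erased rows of z. (This is the maximum-likelihood decoder characterization, Proposition 1.) -/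

import Mathlib

open Finset

noncomputable def Fsum (n : ℕ) (r : ℝ) (M : Finset (Fin n)) : ℝ :=
  ∑ π : Equiv.Perm (Fin n), r ^ (M.filter fun i => π i = i).card

lemma Fsum_congr {n : ℕ} (r : ℝ) {M M' : Finset (Fin n)} (h : M.card = M'.card) :
    Fsum n r M = Fsum n r M' := by
  classical
  obtain ⟨e⟩ : Nonempty ({i // i ∈ M} ≃ {i // i ∈ M'}) := ⟨Finset.equivOfCardEq h⟩
  set ρ : Equiv.Perm (Fin n) := e.extendSubtype with hρ
  have hmem : ∀ i, i ∈ M ↔ ρ i ∈ M' := by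
    intro i
    constructor
    · intro hi; exact e.extendSubtype_mem i hi
    · intro hi; by_contra hni
      exact (e.extendSubtype_not_mem i hni) hi
  unfold Fsum
  apply Fintype.sum_equiv ((Equiv.mulRight ρ⁻¹).trans (Equiv.mulLeft ρ))
  intro π
  congr 1
  apply Finset.card_bij (fun i _ => ρ i)
  · intro i hi
    simp only [mem_filter] at hi ⊢
    refine ⟨(hmem i).1 hi.1, ?_⟩
    simp [Equiv.Perm.mul_apply, hi.2]
  · intro a ha b hb hab; exact ρ.injective hab
  · intro j hj
    simp only [mem_filter] at hj
    refine ⟨ρ⁻¹ j, ?_, by simp⟩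
    simp only [mem_filter]
    refine ⟨by rw [hmem (ρ⁻¹ j)]; simpa using hj.1, ?_⟩
    have h2 := hj.2
    simp only [Equiv.trans_apply, Equiv.coe_mulRight, Equiv.coe_mulLeft,
      Equiv.Perm.mul_apply] at h2
    apply ρ.injective
    simpa using h2

lemma Fsum_lt {n : ℕ} {r : ℝ} (hr : 1 < r) {M M' : Finset (Fin n)}
    (hsub : M ⊆ M') (hcard : M.card < M'.card) : Fsum n r M < Fsum n r M' := by
  unfold Fsum
  apply Finset.sum_lt_sum
  · intro π _
    exact pow_le_pow_right₀ (le_of_lt hr) (card_le_card (filter_subset_filter _ hsub))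
  · refine ⟨1, mem_univ _, ?_⟩
    have h1 : ∀ (N : Finset (Fin n)), N.filter (fun i => (1 : Equiv.Perm (Fin n)) i = i) = N := by
      intro N; apply filter_true_of_mem; intro i _; rfl
    rw [h1, h1]
    exact pow_lt_pow_right₀ hr hcard

lemma Fsum_lt_of_card {n : ℕ} {r : ℝ} (hr : 1 < r) {M M' : Finset (Fin n)}
    (hcard : M.card < M'.card) : Fsum n r M < Fsum n r M' := by
  obtain ⟨t, ht, htc⟩ := Finset.exists_subset_card_eq (s := M') (le_of_lt hcard)
  calc Fsum n r M = Fsum n r t := Fsum_congr r htc.symm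
  _ < Fsum n r M' := Fsum_lt hr ht (by omega)

lemma Fsum_le_of_card {n : ℕ} {r : ℝ} (hr : 1 < r) {M M' : Finset (Fin n)}
    (hcard : M.card ≤ M'.card) : Fsum n r M ≤ Fsum n r M' := by
  rcases eq_or_lt_of_le hcard with h | h
  · exact le_of_eq (Fsum_congr r h)
  · exact le_of_lt (Fsum_lt_of_card hr h)

lemma Fsum_lt_iff {n : ℕ} {r : ℝ} (hr : 1 < r) {M M' : Finset (Fin n)} :
    Fsum n r M < Fsum n r M' ↔ M.card < M'.card := by
  constructor
  · intro h
    by_contra hc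
    exact absurd h (not_lt.2 (Fsum_le_of_card hr (not_lt.1 hc)))
  · exact Fsum_lt_of_card hr

lemma main_formula {n l : ℕ} (pe q r : ℝ)
    (W : Option (Fin l → ZMod 2) → (Fin l → ZMod 2) → ℝ)
    (hW : ∀ u v, W u v = if u = some v then q * r else if u = none then pe else q)
    (z : Fin n → Option (Fin l → ZMod 2))
    (hz : ∀ i j : Fin n, z i = z j → z i ≠ none → i = j)
    (x : Fin n → (Fin l → ZMod 2)) (hx : Function.Injective x) :
    ∃ M : Finset (Fin n),
      M.card = (Finset.univ.filter fun i : Fin n => ∃ j : Fin n, z j = some (x i)).card ∧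
      (∑ π : Equiv.Perm (Fin n), ∏ i : Fin n, W (z i) (x (π i))) =
        (∏ i : Fin n, (z i).elim pe (fun _ => q)) * Fsum n r M := by
  classical
  set B : Finset (Fin n) := univ.filter (fun i : Fin n => ∃ j, z i = some (x j)) with hBdef
  have hBmem : ∀ i, i ∈ B ↔ ∃ j, z i = some (x j) := by
    intro i; simp [hBdef]
  set σ : Fin n → Fin n :=
    fun i => if h : ∃ j, z i = some (x j) then h.choose else i with hσdef
  have hσ : ∀ i, i ∈ B → z i = some (x (σ i)) := by
    intro i hi
    have h := (hBmem i).1 hi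
    simp only [hσdef, dif_pos h]
    exact h.choose_spec
  -- the equivalence from B to A
  have hσA : ∀ i, i ∈ B → σ i ∈ univ.filter (fun k : Fin n => ∃ j, z j = some (x k)) := by
    intro i hi
    simp only [mem_filter, mem_univ, true_and]
    exact ⟨i, hσ i hi⟩
  set A : Finset (Fin n) := univ.filter (fun k : Fin n => ∃ j, z j = some (x k)) with hAdef
  have hbij : Function.Bijective
      (fun p : {i // i ∈ B} => (⟨σ p.1, hσA p.1 p.2⟩ : {k // k ∈ A})) := by
    constructor
    · rintro ⟨i₁, h₁⟩ ⟨i₂, h₂⟩ hh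
      simp only [Subtype.mk.injEq] at hh
      have e1 : z i₁ = z i₂ := by
        rw [hσ i₁ h₁, hσ i₂ h₂, hh]
      have : i₁ = i₂ := hz i₁ i₂ e1 (by rw [hσ i₁ h₁]; simp)
      exact Subtype.ext this
    · rintro ⟨k, hk⟩
      simp only [hAdef, mem_filter, mem_univ, true_and] at hk
      obtain ⟨j, hj⟩ := hk
      have hjB : j ∈ B := (hBmem j).2 ⟨k, hj⟩
      refine ⟨⟨j, hjB⟩, ?_⟩
      apply Subtype.ext
      have : some (x (σ j)) = some (x k) := by rw [← hσ j hjB, hj]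
      exact hx (Option.some_injective _ this)
  set e : {i // i ∈ B} ≃ {k // k ∈ A} := Equiv.ofBijective _ hbij with hedef
  set τ : Equiv.Perm (Fin n) := e.extendSubtype with hτdef
  have hτ : ∀ i, i ∈ B → τ i = σ i := by
    intro i hi
    have := e.extendSubtype_apply_of_mem i hi
    rw [hτdef, this]
    rfl
  have hcard : B.card = A.card := by
    have := Fintype.card_congr e
    simpa using this
  refine ⟨B, by rw [hcard], ?_⟩
  -- per-term factorization
  have hterm : ∀ (π : Equiv.Perm (Fin n)) (i : Fin n),
      W (z i) (x (π i)) =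
        (z i).elim pe (fun _ => q) * (if z i = some (x (π i)) then r else 1) := by
    intro π i
    rw [hW]
    cases hzi : z i with
    | none => simp
    | some w =>
      by_cases hw : w = x (π i)
      · simp [hw]
      · simp [hw, Option.some_inj]
  have hprod : ∀ π : Equiv.Perm (Fin n),
      ∏ i : Fin n, W (z i) (x (π i)) =
        (∏ i : Fin n, (z i).elim pe (fun _ => q)) *
          r ^ (univ.filter fun i : Fin n => z i = some (x (π i))).card := by
    intro π
    rw [Finset.prod_congr rfl (fun i _ => hterm π i), Finset.prod_mul_distrib]
    congr 1
    rw [Finset.prod_ite, Finset.prod_const, Finset.prod_const_one, mul_one]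
  -- identify the filter with B ∩ {π i = τ i}
  have hfilt : ∀ π : Equiv.Perm (Fin n),
      (univ.filter fun i : Fin n => z i = some (x (π i))) =
        B.filter (fun i => π i = τ i) := by
    intro π
    ext i
    simp only [mem_filter, mem_univ, true_and]
    constructor
    · intro h
      have hiB : i ∈ B := (hBmem i).2 ⟨π i, h⟩
      refine ⟨hiB, ?_⟩
      rw [hτ i hiB]
      have : some (x (σ i)) = some (x (π i)) := by rw [← hσ i hiB, h]
      exact (hx (Option.some_injective _ this)).symm
    · rintro ⟨hiB, hpi⟩
      rw [hσ i hiB]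
      congr 1
      rw [hpi, hτ i hiB]
  calc ∑ π : Equiv.Perm (Fin n), ∏ i : Fin n, W (z i) (x (π i))
      = ∑ π : Equiv.Perm (Fin n), (∏ i : Fin n, (z i).elim pe (fun _ => q)) *
          r ^ (B.filter (fun i => π i = τ i)).card := by
        refine Finset.sum_congr rfl fun π _ => ?_
        rw [hprod π, hfilt π]
    _ = (∏ i : Fin n, (z i).elim pe (fun _ => q)) *
          ∑ π : Equiv.Perm (Fin n), r ^ (B.filter (fun i => π i = τ i)).card := by
        rw [Finset.mul_sum]
    _ = (∏ i : Fin n, (z i).elim pe (fun _ => q)) * Fsum n r B := by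
        congr 1
        unfold Fsum
        apply Fintype.sum_equiv (Equiv.mulLeft τ⁻¹)
        intro π
        congr 2
        apply Finset.filter_congr
        intro i _
        simp only [Equiv.coe_mulLeft, Equiv.Perm.mul_apply]
        constructor
        · intro h
          rw [h]
          simp
        · intro h; apply_fun τ at h; simpa using h

/-- **Proposition 1 (ML decoder characterization).**
Channel-1 weight `W u v`: `p_c` if `u = some v`, `p_e` if `u = none`
(erasure), `p_s / (2^l - 1)` otherwise.  The permutation-averaged
likelihood `L(x, z) = ∑_{π ∈ S_n} ∏_i W (z i) (x (π i))` satisfies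
`L(x¹, z) > L(x², z)` iff `x¹` shares more rows with the non-erased rows
of `z` than `x²` does. -/
theorem stmt0 (n l : ℕ) (hn : 1 ≤ n) (hl : 1 ≤ l)
    (pc pe ps : ℝ) (hpc : 0 < pc) (hpe : 0 < pe) (hps : 0 < ps)
    (hsum : pc + pe + ps = 1) (hgt : pc > ps / (2 ^ l - 1))
    (W : Option (Fin l → ZMod 2) → (Fin l → ZMod 2) → ℝ)
    (hW : ∀ u v, W u v =
      if u = some v then pc else if u = none then pe else ps / (2 ^ l - 1))
    (z : Fin n → Option (Fin l → ZMod 2))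
    (hz : ∀ i j : Fin n, z i = z j → z i ≠ none → i = j)
    (x₁ x₂ : Fin n → (Fin l → ZMod 2))
    (hx₁ : Function.Injective x₁) (hx₂ : Function.Injective x₂) :
    ((∑ π : Equiv.Perm (Fin n), ∏ i : Fin n, W (z i) (x₁ (π i))) >
        ∑ π : Equiv.Perm (Fin n), ∏ i : Fin n, W (z i) (x₂ (π i))) ↔
      (Finset.univ.filter fun i : Fin n => ∃ j : Fin n, z j = some (x₁ i)).card >
        (Finset.univ.filter fun i : Fin n => ∃ j : Fin n, z j = some (x₂ i)).card := by
  have h2l : (1 : ℝ) < 2 ^ l := by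
    have : (2:ℝ) ^ 1 ≤ 2 ^ l := pow_le_pow_right₀ (by norm_num) hl
    norm_num at this; linarith
  set q : ℝ := ps / (2 ^ l - 1) with hqdef
  have hq : 0 < q := div_pos hps (by linarith)
  set r : ℝ := pc / q with hrdef
  have hr : 1 < r := (one_lt_div hq).2 hgt
  have hqr : q * r = pc := by
    rw [hrdef]; field_simp
  have hW' : ∀ u v, W u v = if u = some v then q * r else if u = none then pe else q := by
    intro u v; rw [hW, hqr]
  obtain ⟨M₁, hM₁c, hM₁e⟩ := main_formula pe q r W hW' z hz x₁ hx₁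
  obtain ⟨M₂, hM₂c, hM₂e⟩ := main_formula pe q r W hW' z hz x₂ hx₂
  have hC : 0 < ∏ i : Fin n, (z i).elim pe (fun _ => q) := by
    apply Finset.prod_pos
    intro i _
    cases z i <;> simp [hpe, hq]
  rw [hM₁e, hM₂e, gt_iff_lt, mul_lt_mul_iff_right₀ hC, Fsum_lt_iff hr, hM₂c, hM₁c]
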